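/- Let A ∈ ℝ^{n×n} be row-stochastic, c, p̄ ∈ ℝ^n nonnegative, and let p* = p*[A,c,p̄] be the unique minimizer over 𝒫_pr(c,p̄) = {p ∈ ℝ^n : 0 ≤ p ≤ p̄, p ≤ c + Aᵀp} of some (equivalently, any) decreasing function f : [0,p̄] → ℝ. Then p* is a clearing vector, i.e., p* = min(p̄, c + Aᵀp*) componentwise. -/

import Mathlib

open Matrix Finset

/-- The polytope `𝒫_pr(c, p̄)` of feasible payment vectors under the pro-rata rule:
`0 ≤ p ≤ p̄` and `p ≤ c + Aᵀp`. -/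
def FeasibleVec (n : ℕ) (A : Matrix (Fin n) (Fin n) ℝ) (c pbar p : Fin n → ℝ) : Prop :=
  (∀ i, 0 ≤ p i) ∧ (∀ i, p i ≤ pbar i) ∧ (∀ i, p i ≤ c i + Aᵀ.mulVec p i)

/-- A function `f : [0, p̄] → ℝ` is decreasing: `p ≤ q` with `p ≠ q` implies `f q < f p`. -/
def DecreasingOn (n : ℕ) (pbar : Fin n → ℝ) (f : (Fin n → ℝ) → ℝ) : Prop :=
  ∀ p q : Fin n → ℝ, (∀ i, 0 ≤ p i) → (∀ i, p i ≤ q i) → (∀ i, q i ≤ pbar i) →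
    p ≠ q → f q < f p

/-- The minimizer `p*` of a decreasing function over `𝒫_pr(c, p̄)` is a clearing vector:
`p* = min(p̄, c + Aᵀp*)` componentwise. -/
theorem prorata_min_is_clearing (n : ℕ) (hn : 1 ≤ n)
    (A : Matrix (Fin n) (Fin n) ℝ) (hA0 : ∀ i j, 0 ≤ A i j) (hA1 : ∀ i, ∑ j, A i j = 1)
    (c pbar : Fin n → ℝ) (hc : ∀ i, 0 ≤ c i) (hpbar : ∀ i, 0 ≤ pbar i)
    (f : (Fin n → ℝ) → ℝ) (hf : DecreasingOn n pbar f)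
    (pstar : Fin n → ℝ) (hfeas : FeasibleVec n A c pbar pstar)
    (hmin : ∀ q, FeasibleVec n A c pbar q → f pstar ≤ f q) :
    ∀ i, pstar i = min (pbar i) (c i + Aᵀ.mulVec pstar i) := by
  intro i
  obtain ⟨h0, hub, hAb⟩ := hfeas
  have hle : pstar i ≤ min (pbar i) (c i + Aᵀ.mulVec pstar i) := le_min (hub i) (hAb i)
  by_contra hne
  have hlt : pstar i < min (pbar i) (c i + Aᵀ.mulVec pstar i) := lt_of_le_of_ne hle hne
  set q : Fin n → ℝ := Function.update pstar i (min (pbar i) (c i + Aᵀ.mulVec pstar i)) with hq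
  have hqi : q i = min (pbar i) (c i + Aᵀ.mulVec pstar i) := Function.update_self _ _ _
  have hqj : ∀ j, j ≠ i → q j = pstar j := fun j h => Function.update_of_ne h _ _
  have hpq : ∀ j, pstar j ≤ q j := by
    intro j
    by_cases h : j = i
    · subst h; rw [hqi]; exact hle
    · rw [hqj j h]
  have hmul : ∀ j, Aᵀ.mulVec pstar j ≤ Aᵀ.mulVec q j := by
    intro j
    simp only [Matrix.mulVec, dotProduct, Matrix.transpose_apply]
    exact Finset.sum_le_sum fun k _ => mul_le_mul_of_nonneg_left (hpq k) (hA0 k j)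
  have hqfeas : FeasibleVec n A c pbar q := by
    refine ⟨fun j => le_trans (h0 j) (hpq j), ?_, ?_⟩
    · intro j
      by_cases h : j = i
      · subst h; rw [hqi]; exact min_le_left _ _
      · rw [hqj j h]; exact hub j
    · intro j
      by_cases h : j = i
      · subst h; rw [hqi]
        exact le_trans (min_le_right _ _) (add_le_add_right (hmul j) _)
      · rw [hqj j h]
        exact le_trans (hAb j) (add_le_add_right (hmul j) _)
  have hneq : pstar ≠ q := fun h => (ne_of_lt hlt) ((congrFun h i).trans hqi)
  have := hf pstar q h0 hpq hqfeas.2.1 hneq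
  exact absurd (hmin q hqfeas) (not_le.mpr this)
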